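/- Let K : X → Y be a linear map between Euclidean spaces and C ⊆ Y a closed convex set with C ∩ Im K ≠ ∅. For any x₀ ∈ K⁻¹(C), the tangent cone satisfies T_{K⁻¹(C)}(x₀) = K⁻¹(T_{C ∩ Im K}(K x₀)). -/

import Mathlib

open Filter Topology Metric Set
open scoped RealInnerProductSpace NNReal ENNReal

noncomputable section

/-- Bouligand (contingent) tangent cone. -/
def tanCone {G : Type*} [AddCommGroup G] [Module ℝ G] [TopologicalSpace G]
    (s : Set G) (x : G) : Set G :=
  {w | ∃ (t : ℕ → ℝ) (wk : ℕ → G), (∀ n, 0 < t n) ∧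
    Tendsto t atTop (𝓝 0) ∧ Tendsto wk atTop (𝓝 w) ∧ ∀ n, x + t n • wk n ∈ s}

variable {E F : Type*} [NormedAddCommGroup E] [InnerProductSpace ℝ E]
  [NormedAddCommGroup F] [InnerProductSpace ℝ F]

/-- Graph of a set-valued mapping. -/
def gph (S : E → Set F) : Set (E × F) := {p | p.2 ∈ S p.1}

/-- Graphical derivative. -/
def gder (S : E → Set F) (x : E) (y : F) (w : E) : Set F :=
  {z | (w, z) ∈ tanCone (gph S) (x, y)}

/-- Local closedness of the graph around a point. -/
def LocallyClosedGraph (S : E → Set F) (x : E) (y : F) : Prop :=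
  ∃ U ∈ 𝓝 ((x, y) : E × F), IsClosed (U ∩ gph S)

/-- Metric subregularity of a set-valued mapping at `x` for `y`. -/
def MetrSubreg (S : E → Set F) (x : E) (y : F) : Prop :=
  ∃ κ : ℝ≥0, ∃ ε : ℝ, 0 < ε ∧ ∀ x' ∈ ball x ε,
    EMetric.infEdist x' {u | y ∈ S u} ≤ (κ : ℝ≥0∞) * EMetric.infEdist y (S x')

/-- Convex subdifferential of an extended-real-valued function. -/
def subdiff (φ : E → EReal) (x : E) : Set E :=
  {v | ∀ u, φ x + ((⟪v, u - x⟫ : ℝ) : EReal) ≤ φ u}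

/-- Properness. -/
def ProperFn (φ : E → EReal) : Prop := (∀ x, φ x ≠ ⊥) ∧ ∃ x, φ x ≠ ⊤

/-- Convexity via the epigraph. -/
def ConvexFn (φ : E → EReal) : Prop := Convex ℝ {p : E × ℝ | φ p.1 ≤ (p.2 : EReal)}

/-- Fenchel conjugate. -/
def conjFn (φ : E → EReal) (v : E) : EReal := ⨆ x, ((⟪v, x⟫ : ℝ) : EReal) - φ x

/-- Second subderivative. -/
def secondSubderiv (φ : E → EReal) (x v w : E) : EReal :=
  Filter.liminf (fun p : ℝ × E =>
    (((2 / p.1 ^ 2 : ℝ)) : EReal) *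
      (φ (x + p.1 • p.2) - φ x - ((p.1 * ⟪v, p.2⟫ : ℝ) : EReal)))
    ((𝓝[>] (0 : ℝ)) ×ˢ 𝓝 w)

/-- Quadratic growth condition at `x` for `v`. -/
def QuadGrowth (φ : E → EReal) (x v : E) : Prop :=
  ∃ c : ℝ, 0 < c ∧ ∃ ε : ℝ, 0 < ε ∧ ∀ u ∈ ball x ε,
    φ x + ((⟪v, u - x⟫ + c / 2 * (infDist u {u' | v ∈ subdiff φ u'}) ^ 2 : ℝ) : EReal) ≤ φ u


def posCone {G : Type*} [AddCommGroup G] [Module ℝ G] (s : Set G) (x : G) : Set G :=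
  {v | ∃ l : ℝ, 0 ≤ l ∧ ∃ ω ∈ s, v = l • (ω - x)}

lemma tanCone_subset_closure_posCone {G : Type*} [NormedAddCommGroup G] [NormedSpace ℝ G]
    (s : Set G) (x : G) : tanCone s x ⊆ closure (posCone s x) := by
  rintro w ⟨t, wk, ht, _, hwk, hmem⟩
  refine mem_closure_of_tendsto hwk (Filter.Eventually.of_forall fun n => ?_)
  refine ⟨(t n)⁻¹, inv_nonneg.2 (ht n).le, x + t n • wk n, hmem n, ?_⟩
  rw [add_sub_cancel_left, smul_smul, inv_mul_cancel₀ (ht n).ne', one_smul]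

lemma closure_posCone_subset_tanCone {G : Type*} [NormedAddCommGroup G] [NormedSpace ℝ G]
    {s : Set G} {x : G} (hs : Convex ℝ s) (hx : x ∈ s) :
    closure (posCone s x) ⊆ tanCone s x := by
  intro w hw
  obtain ⟨u, hu, hulim⟩ := mem_closure_iff_seq_limit.1 hw
  choose l hl ω hω hueq using hu
  have hl1 : ∀ n, (0:ℝ) < l n + 1 := fun n => by have := hl n; linarith
  refine ⟨fun n => (1 / (n + 1 : ℝ)) * (1 / (l n + 1)), u,
    fun n => by have := hl1 n; positivity, ?_, hulim, ?_⟩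
  · apply squeeze_zero (g := fun n : ℕ => 1 / (n + 1 : ℝ))
      (fun n => by have := hl1 n; positivity)
      (fun n => ?_) tendsto_one_div_add_atTop_nhds_zero_nat
    have h1 : (0:ℝ) < l n + 1 := hl1 n
    have : (1:ℝ) / (l n + 1) ≤ 1 := by
      rw [div_le_one h1]; have := hl n; linarith
    have h2 : (0:ℝ) ≤ 1 / (n + 1 : ℝ) := by positivity
    calc (1 / (n + 1 : ℝ)) * (1 / (l n + 1)) ≤ (1 / (n + 1 : ℝ)) * 1 :=
          mul_le_mul_of_nonneg_left this h2
      _ = 1 / (n + 1 : ℝ) := mul_one _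
  · intro n
    set μ : ℝ := ((1 / (n + 1 : ℝ)) * (1 / (l n + 1))) * l n with hμ
    have h1 : (0:ℝ) < l n + 1 := hl1 n
    have hμ0 : 0 ≤ μ := by have := hl n; have := hl1 n; positivity
    have hμ1 : μ ≤ 1 := by
      have hln : l n / (l n + 1) ≤ 1 := by
        rw [div_le_one h1]; linarith
      have hn1 : (1:ℝ) / (n + 1 : ℝ) ≤ 1 := by
        rw [div_le_one (by positivity)]; linarith [Nat.cast_nonneg (α := ℝ) n]
      have : μ = (1 / (n + 1 : ℝ)) * (l n / (l n + 1)) := by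
        rw [hμ]; ring
      rw [this]
      calc (1 / (n + 1 : ℝ)) * (l n / (l n + 1)) ≤ 1 * 1 := by
            apply mul_le_mul hn1 hln (div_nonneg (hl n) h1.le) (by norm_num)
        _ = 1 := by norm_num
    have key : x + ((1 / (n + 1 : ℝ)) * (1 / (l n + 1))) • u n
        = (1 - μ) • x + μ • ω n := by
      rw [hueq n, hμ]; module
    rw [key]
    exact hs hx (hω n) (by linarith) hμ0 (by ring)

/-- tangent cone to the linear inverse image of a closed convex set. -/
theorem stmt11 {E F : Type*} [NormedAddCommGroup E] [InnerProductSpace ℝ E]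
    [NormedAddCommGroup F] [InnerProductSpace ℝ F]
    [FiniteDimensional ℝ E] [FiniteDimensional ℝ F]
    (K : E →ₗ[ℝ] F) (C : Set F) (hC : IsClosed C) (hCconv : Convex ℝ C)
    (hne : (C ∩ Set.range K).Nonempty) (x₀ : E) (hx₀ : K x₀ ∈ C) :
    tanCone ((⇑K) ⁻¹' C) x₀ = (⇑K) ⁻¹' (tanCone (C ∩ Set.range K) (K x₀)) := by
  have hKcont : Continuous K := K.continuous_of_finiteDimensional
  ext w
  simp only [Set.mem_preimage]
  constructor
  · rintro ⟨t, wk, ht, ht0, hwk, hmem⟩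
    refine ⟨t, fun n => K (wk n), ht, ht0, (hKcont.tendsto w).comp hwk, fun n => ?_⟩
    have h1 : K x₀ + t n • K (wk n) = K (x₀ + t n • wk n) := by
      rw [map_add, map_smul]
    rw [h1]
    exact ⟨hmem n, ⟨_, rfl⟩⟩
  · intro hw
    set Ω := (⇑K) ⁻¹' C with hΩ
    have hΩconv : Convex ℝ Ω := hCconv.linear_preimage K
    have hx₀Ω : x₀ ∈ Ω := hx₀
    set T := closure (posCone Ω x₀) with hT
    -- posCone is invariant under adding kernel elements
    have hpos_ker : ∀ v ∈ posCone Ω x₀, ∀ nn : E, K nn = 0 → v + nn ∈ posCone Ω x₀ := by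
      rintro v ⟨l, hl0, ω, hω, rfl⟩ nn hnn
      rcases eq_or_lt_of_le hl0 with h | h
      · refine ⟨1, zero_le_one, x₀ + nn, ?_, by rw [← h]; module⟩
        show K (x₀ + nn) ∈ C
        rw [map_add, hnn, add_zero]; exact hx₀
      · refine ⟨l, hl0, ω + l⁻¹ • nn, ?_, ?_⟩
        · show K (ω + l⁻¹ • nn) ∈ C
          rw [map_add, map_smul, hnn, smul_zero, add_zero]; exact hω
        · have : l • ((ω + l⁻¹ • nn) - x₀) = l • (ω - x₀) + (l * l⁻¹) • nn := by module
          rw [this, mul_inv_cancel₀ h.ne', one_smul]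
    have hker : ∀ v ∈ T, ∀ nn : E, K nn = 0 → v + nn ∈ T := by
      intro v hv nn hnn
      exact map_mem_closure (f := fun y => y + nn) (continuous_id.add continuous_const) hv
        (fun p hp => hpos_ker p hp nn hnn)
    -- K '' T is closed
    set S := (LinearMap.ker K)ᗮ with hS
    set f : S →ₗ[ℝ] F := K ∘ₗ S.subtype with hf
    have finj : Function.Injective f := by
      intro a b hab
      have hsub : ((a : E) - b) ∈ LinearMap.ker K := by
        simp only [LinearMap.mem_ker, map_sub]
        simpa [hf, LinearMap.comp_apply] using sub_eq_zero_of_eq hab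
      have hsubS : ((a : E) - b) ∈ S := S.sub_mem a.2 b.2
      have : ⟪(a : E) - b, (a : E) - b⟫ = 0 := hsubS _ hsub
      have := inner_self_eq_zero.1 this
      exact Subtype.ext (sub_eq_zero.1 this)
    obtain ⟨c, hc, haf⟩ := (f.injective_iff_antilipschitz).1 finj
    have huc : UniformContinuous f := (LinearMap.toContinuousLinearMap f).uniformContinuous
    have hce : IsClosedEmbedding f := haf.isClosedEmbedding huc
    have himg_eq : (⇑K) '' T = ⇑f '' (Subtype.val ⁻¹' T) := by
      apply Set.Subset.antisymm
      · rintro _ ⟨u, hu, rfl⟩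
        obtain ⟨a, ha, b, hb, hab⟩ :=
          Submodule.exists_add_mem_mem_orthogonal (K := LinearMap.ker K) u
        have hbT : b ∈ T := by
          have := hker u hu (-a) (by simpa using (LinearMap.mem_ker.1 ha))
          have heq : u + (-a) = b := by rw [hab]; abel
          rwa [heq] at this
        refine ⟨⟨b, hb⟩, hbT, ?_⟩
        simp only [hf, LinearMap.comp_apply, Submodule.subtype_apply]
        rw [hab, map_add, LinearMap.mem_ker.1 ha, zero_add]
      · rintro _ ⟨⟨b, hb⟩, hbT, rfl⟩
        exact ⟨b, hbT, rfl⟩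
    have himg : IsClosed ((⇑K) '' T) := by
      rw [himg_eq]
      exact hce.isClosedMap _ (IsClosed.preimage continuous_subtype_val isClosed_closure)
    -- chain of inclusions
    have h1 : posCone (C ∩ Set.range ⇑K) (K x₀) ⊆ (⇑K) '' T := by
      rintro _ ⟨l, hl0, c', ⟨hcC, u, rfl⟩, rfl⟩
      refine ⟨l • (u - x₀), subset_closure ⟨l, hl0, u, hcC, rfl⟩, ?_⟩
      rw [map_smul, map_sub]
    have h2 : K w ∈ (⇑K) '' T :=
      himg.closure_subset
        ((closure_mono h1) (tanCone_subset_closure_posCone _ _ hw))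
    obtain ⟨u, huT, hKu⟩ := h2
    have hwT : w ∈ T := by
      have := hker u huT (w - u) (by rw [map_sub, hKu, sub_self])
      simpa using this
    exact closure_posCone_subset_tanCone hΩconv hx₀Ω hwT

end
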